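/- Let X₀ ∼ P₀ and X₁ ∼ P₁ be random vectors in ℝ^d with finite second moments, means μ₀, μ₁ and covariances C₀, C₁, and let Y₀, Y₀′ ∼ P₀ be independent copies also independent of X₀, X₁. For U ∈ ℝ^{d×k} with UᵀU = I_k define Γ(U) = E[‖Uᵀ(X₁−Y₀)‖₂²] − E[‖Uᵀ(X₀−Y₀′)‖₂²], and let M = (μ₁−μ₀)(μ₁−μ₀)ᵀ + C₁ − C₀ with eigenvalues λ₁(M) ≥ ⋯ ≥ λ_d(M). Then the maximum of Γ(U) over all semi-orthogonal U ∈ ℝ^{d×k} equals λ₁(M) + ⋯ + λ_k(M), and it is attained exactly when the column space of U is a top-k eigenspace of M (in particular by any U whose columns are orthonormal eigenvectors of M for the k largest eigenvalues). -/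

import Mathlib

open MeasureTheory ProbabilityTheory Matrix


set_option linter.unusedSectionVars false
set_option maxHeartbeats 2000000

namespace CTP


variable {d k : ℕ}

lemma col_mul {n : Type*} (B : Matrix (Fin d) (Fin d) ℝ) (C : Matrix (Fin d) n ℝ) (j : n) :
    (fun i => (B * C) i j) = B *ᵥ (fun i => C i j) := by
  ext i; simp [Matrix.mul_apply, Matrix.mulVec, dotProduct]

set_option maxHeartbeats 2000000 in
lemma kyfan_main (hk : 1 ≤ k) (hkd : k ≤ d) (ev : Fin d → ℝ) (hev : Antitone ev)
    (V : Matrix (Fin d) (Fin d) ℝ) (hV : Vᵀ * V = 1)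
    (U : Matrix (Fin d) (Fin k) ℝ) (hU : Uᵀ * U = 1) :
    trace (Uᵀ * (V * Matrix.diagonal ev * Vᵀ) * U) ≤ ∑ j : Fin k, ev (Fin.castLE hkd j) ∧
    (trace (Uᵀ * (V * Matrix.diagonal ev * Vᵀ) * U) = ∑ j : Fin k, ev (Fin.castLE hkd j) →
      ∃ W : Matrix (Fin d) (Fin k) ℝ, Wᵀ * W = 1
        ∧ (∀ j : Fin k, (V * Matrix.diagonal ev * Vᵀ) *ᵥ (fun i => W i j)
              = ev (Fin.castLE hkd j) • (fun i => W i j))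
        ∧ Submodule.span ℝ (Set.range fun j : Fin k => (fun i => U i j))
            = Submodule.span ℝ (Set.range fun j : Fin k => (fun i => W i j))) := by
  classical
  have hVV : V * Vᵀ = 1 := mul_eq_one_comm.mp hV
  set D := Matrix.diagonal ev with hD
  set A := Vᵀ * U with hAdef
  have hAA : Aᵀ * A = 1 := by
    rw [hAdef, Matrix.transpose_mul, Matrix.transpose_transpose, Matrix.mul_assoc,
      ← Matrix.mul_assoc V Vᵀ U, hVV, Matrix.one_mul, hU]
  set P := A * Aᵀ with hPdef
  have hPP : P * P = P := by
    rw [hPdef, Matrix.mul_assoc, ← Matrix.mul_assoc Aᵀ A Aᵀ, hAA, Matrix.one_mul]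
  have hPsym : ∀ i l, P i l = P l i := by
    intro i l
    rw [hPdef]
    simp only [Matrix.mul_apply, Matrix.transpose_apply]
    exact Finset.sum_congr rfl fun x _ => mul_comm _ _
  set s : Fin d → ℝ := fun i => P i i with hsdef
  have hscol : ∀ i, ∑ l, (P l i)^2 = s i := by
    intro i
    have h := congrFun (congrFun hPP i) i
    simp only [Matrix.mul_apply] at h
    calc ∑ l, (P l i)^2 = ∑ l, P i l * P l i := by
          refine Finset.sum_congr rfl fun l _ => ?_
          rw [sq, hPsym l i]
      _ = s i := h
  have hs0 : ∀ i, 0 ≤ s i := fun i => by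
    rw [← hscol i]; positivity
  have hs1 : ∀ i, s i ≤ 1 := by
    intro i
    have h1 : (P i i)^2 ≤ ∑ l, (P l i)^2 :=
      Finset.single_le_sum (f := fun l => (P l i)^2) (fun l _ => sq_nonneg _) (Finset.mem_univ i)
    have h2 := hscol i
    have h3 : s i = P i i := rfl
    nlinarith [hs0 i]
  have hsum : ∑ i, s i = (k : ℝ) := by
    have h := Matrix.trace_mul_comm A Aᵀ
    rw [hAA, Matrix.trace_one] at h
    have : Matrix.trace P = (k : ℝ) := by
      rw [← hPdef] at h; rw [h]; simp
    simpa [Matrix.trace, Matrix.diag] using this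
  have htrace : trace (Uᵀ * (V * D * Vᵀ) * U) = ∑ i, ev i * s i := by
    have e1 : Uᵀ * (V * D * Vᵀ) * U = Aᵀ * D * A := by
      rw [hAdef, Matrix.transpose_mul, Matrix.transpose_transpose]
      simp only [Matrix.mul_assoc]
    rw [e1, Matrix.trace_mul_cycle, Matrix.trace_mul_comm]
    rw [← hPdef]
    simp only [Matrix.trace, Matrix.diag, Matrix.mul_apply, hD, Matrix.diagonal_apply,
      ite_mul, zero_mul]
    exact Finset.sum_congr rfl fun i _ => by rw [Finset.sum_ite_eq]; simp; exact Or.inl rfl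
  set ckidx : Fin d := Fin.castLE hkd ⟨k-1, by omega⟩ with hck
  set c := ev ckidx with hc
  have hclower : ∀ i : Fin d, (i : ℕ) < k → c ≤ ev i := by
    intro i hi
    refine hev ?_
    rw [Fin.le_def]
    simp only [hck, Fin.coe_castLE]
    omega
  have hcupper : ∀ i : Fin d, k - 1 ≤ (i : ℕ) → ev i ≤ c := by
    intro i hi
    refine hev ?_
    rw [Fin.le_def]
    simp only [hck, Fin.coe_castLE]
    omega
  have hterm : ∀ i : Fin d, (ev i - c) * s i ≤ (if (i : ℕ) < k then ev i - c else 0) := by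
    intro i
    by_cases h : (i : ℕ) < k
    · rw [if_pos h]
      have := hclower i h
      nlinarith [hs1 i, hs0 i]
    · rw [if_neg h]
      have := hcupper i (by omega)
      nlinarith [hs0 i]
  have hsum_ite : ∑ i : Fin d, (if (i : ℕ) < k then ev i - c else 0)
      = ∑ j : Fin k, (ev (Fin.castLE hkd j) - c) := by
    set f : ℕ → ℝ := fun n => if h : n < d then (if n < k then ev ⟨n, h⟩ - c else 0) else 0 with hf
    have l1 : ∑ i : Fin d, (if (i : ℕ) < k then ev i - c else 0) = ∑ n ∈ Finset.range d, f n := by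
      rw [← Fin.sum_univ_eq_sum_range]
      refine Finset.sum_congr rfl fun i _ => ?_
      rw [hf]
      simp only [dif_pos i.isLt, Fin.eta]
    have l2 : ∑ n ∈ Finset.range k, f n = ∑ j : Fin k, (ev (Fin.castLE hkd j) - c) := by
      rw [← Fin.sum_univ_eq_sum_range]
      refine Finset.sum_congr rfl fun j _ => ?_
      rw [hf]
      have hjd : (j : ℕ) < d := lt_of_lt_of_le j.isLt hkd
      simp only [dif_pos hjd, if_pos j.isLt]
      congr 1
    have l3 : ∑ n ∈ Finset.Ico k d, f n = 0 := by
      refine Finset.sum_eq_zero fun n hn => ?_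
      rw [Finset.mem_Ico] at hn
      rw [hf]
      by_cases h : n < d
      · simp [dif_pos h, if_neg (by omega : ¬ n < k)]
      · simp [dif_neg h]
    rw [l1, Finset.range_eq_Ico, ← Finset.sum_Ico_consecutive f (Nat.zero_le k) hkd,
      ← Finset.range_eq_Ico, l2, l3, add_zero]
  have e1 : ∑ i, ev i * s i = (∑ i, (ev i - c) * s i) + c * (k : ℝ) := by
    rw [← hsum, Finset.mul_sum, ← Finset.sum_add_distrib]
    exact Finset.sum_congr rfl fun i _ => by ring
  have e2 : (∑ i : Fin d, (if (i : ℕ) < k then ev i - c else 0)) + c * (k : ℝ)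
      = ∑ j : Fin k, ev (Fin.castLE hkd j) := by
    rw [hsum_ite, Finset.sum_sub_distrib]
    simp only [Finset.sum_const, Finset.card_univ, Fintype.card_fin, nsmul_eq_mul]
    ring
  have hsumle := Finset.sum_le_sum (fun i (_ : i ∈ Finset.univ) => hterm i)
  constructor
  · rw [htrace, e1, ← e2]
    linarith
  · intro heq
    rw [htrace, e1, ← e2] at heq
    have heq2 : ∑ i : Fin d, (ev i - c) * s i
        = ∑ i : Fin d, (if (i : ℕ) < k then ev i - c else 0) := by linarith
    have hper := (Finset.sum_eq_sum_iff_of_le (fun i (_ : i ∈ Finset.univ) => hterm i)).mp heq2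
    -- equality conditions on s
    have hfull : ∀ i : Fin d, c < ev i → s i = 1 := by
      intro i hci
      have hik : (i : ℕ) < k := by
        by_contra h
        have := hcupper i (by omega)
        linarith
      have h := hper i (Finset.mem_univ i)
      rw [if_pos hik] at h
      have h2 : (ev i - c) * (s i - 1) = 0 := by linarith [h]
      rcases mul_eq_zero.mp h2 with h1 | h1
      · linarith
      · linarith
    have hzero : ∀ i : Fin d, ev i < c → s i = 0 := by
      intro i hci
      have hik : ¬ (i : ℕ) < k := fun h => absurd (hclower i h) (by linarith)
      have h := hper i (Finset.mem_univ i)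
      rw [if_neg hik] at h
      rcases mul_eq_zero.mp h with h1 | h1
      · linarith
      · exact h1
    -- the number of eigenvalues strictly above c
    set F : Finset (Fin d) := Finset.univ.filter (fun i => c < ev i) with hF
    set m := F.card with hm
    have hdc : ∀ i j : Fin d, i ≤ j → j ∈ F → i ∈ F := by
      intro i j hij hj
      simp only [hF, Finset.mem_filter, Finset.mem_univ, true_and] at hj ⊢
      exact lt_of_lt_of_le hj (hev hij)
    have hmemF : ∀ i : Fin d, i ∈ F ↔ (i : ℕ) < m := by
      intro i
      constructor
      · intro hi
        have hsub : Finset.Iic i ⊆ F := fun j hj => hdc j i (Finset.mem_Iic.mp hj) hi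
        have h1 := Finset.card_le_card hsub
        rw [Fin.card_Iic] at h1
        omega
      · intro hi
        by_contra hnotin
        have hsub : F ⊆ Finset.Iio i := by
          intro j hj
          rw [Finset.mem_Iio]
          by_contra hji
          exact hnotin (hdc i j (not_lt.mp hji) hj)
        have h1 := Finset.card_le_card hsub
        rw [Fin.card_Iio] at h1
        omega
    have hlt : ∀ i : Fin d, ((i : ℕ) < m ↔ c < ev i) := by
      intro i
      rw [← hmemF i, hF]
      simp
    have hmk : m < k := by
      by_contra h
      push_neg at h
      have h1 : (ckidx : ℕ) < m := by
        simp only [hck, Fin.coe_castLE]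
        omega
      have h2 := (hlt ckidx).mp h1
      rw [← hc] at h2
      exact lt_irrefl _ h2
    have hmd : m ≤ d := le_trans (le_of_lt hmk) hkd
    -- columns of P
    have hcol1 : ∀ i : Fin d, (i : ℕ) < m → ∀ l, P l i = if l = i then 1 else 0 := by
      intro i him l
      have hs_i : s i = 1 := hfull i ((hlt i).mp him)
      have h1 : ∑ l, (P l i)^2 = 1 := by rw [hscol i, hs_i]
      have hPii : P i i = 1 := hs_i
      by_cases hl : l = i
      · rw [if_pos hl, hl]; exact hPii
      · rw [if_neg hl]
        have h3 := Finset.add_sum_erase Finset.univ (fun l => (P l i)^2) (Finset.mem_univ i)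
        have h2 : ∑ x ∈ Finset.univ.erase i, (P x i)^2 = 0 := by
          nlinarith [h1, hPii, h3]
        have h4 := (Finset.sum_eq_zero_iff_of_nonneg
          (fun x (_ : x ∈ Finset.univ.erase i) => sq_nonneg (P x i))).mp h2 l
          (Finset.mem_erase.mpr ⟨hl, Finset.mem_univ l⟩)
        exact pow_eq_zero_iff (by norm_num) |>.mp h4
    have hcol0 : ∀ i : Fin d, ev i < c → ∀ l, P l i = 0 := by
      intro i hci l
      have hs_i : s i = 0 := hzero i hci
      have h1 : ∑ l, (P l i)^2 = 0 := by rw [hscol i, hs_i]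
      have h4 := (Finset.sum_eq_zero_iff_of_nonneg
        (fun x (_ : x ∈ Finset.univ) => sq_nonneg (P x i))).mp h1 l (Finset.mem_univ l)
      exact pow_eq_zero_iff (by norm_num) |>.mp h4
    -- move to Euclidean space
    set φ : (Fin d → ℝ) ≃ₗ[ℝ] EuclideanSpace ℝ (Fin d) :=
      (WithLp.linearEquiv 2 ℝ (Fin d → ℝ)).symm with hφdef
    have hinner : ∀ (x y : EuclideanSpace ℝ (Fin d)), inner ℝ x y = ∑ i, x i * y i := by
      intro x y
      rw [PiLp.inner_apply]
      simp [RCLike.inner_apply, conj_trivial]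
      exact Finset.sum_congr rfl fun _ _ => mul_comm _ _
    have hONgen : ∀ (n : ℕ) (B : Matrix (Fin d) (Fin n) ℝ), Bᵀ * B = 1 →
        Orthonormal ℝ (fun j : Fin n => φ (fun i => B i j)) := by
      intro n B hB
      rw [orthonormal_iff_ite]
      intro i j
      have h1 := congrFun (congrFun hB i) j
      simp only [Matrix.mul_apply, Matrix.transpose_apply, Matrix.one_apply] at h1
      rw [hinner]
      exact h1
    have uON := hONgen k U hU
    have vON := hONgen d V hV
    set S : Submodule ℝ (EuclideanSpace ℝ (Fin d)) :=
      Submodule.map φ.toLinearMap (LinearMap.range (Matrix.mulVecLin U)) with hS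
    have hSmem : ∀ x : EuclideanSpace ℝ (Fin d), x ∈ S ↔ ∃ y : Fin k → ℝ, φ (U *ᵥ y) = x := by
      intro x
      simp only [hS, Submodule.mem_map, LinearMap.mem_range, Matrix.mulVecLin_apply]
      constructor
      · rintro ⟨z, ⟨y, hy⟩, hz⟩; exact ⟨y, by rw [hy]; exact hz⟩
      · rintro ⟨y, hy⟩; exact ⟨U *ᵥ y, ⟨y, rfl⟩, hy⟩
    have hSspan : S = Submodule.span ℝ (Set.range fun j : Fin k => φ (fun i => U i j)) := by
      rw [hS, Matrix.range_mulVecLin, Submodule.map_span, ← Set.range_comp]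
      rfl
    have hfinS : Module.finrank ℝ S = k := by
      rw [hSspan, finrank_span_eq_card uON.linearIndependent]
      exact Fintype.card_fin k
    have hVP : V * P = U * Uᵀ * V := by
      rw [hPdef, hAdef, Matrix.transpose_mul, Matrix.transpose_transpose]
      calc V * (Vᵀ * U * (Uᵀ * V)) = (V * Vᵀ) * (U * (Uᵀ * V)) := by simp only [Matrix.mul_assoc]
        _ = U * Uᵀ * V := by rw [hVV, Matrix.one_mul, Matrix.mul_assoc]
    have hUUVP : (U * Uᵀ) * (V * P) = V * P := by
      have e3 : (U * Uᵀ) * (V * P) = (U * Uᵀ * V) * P := by simp only [Matrix.mul_assoc]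
      rw [e3, ← hVP, Matrix.mul_assoc, hPP]
    have hvmem : ∀ i : Fin d, (i : ℕ) < m → φ (fun l => V l i) ∈ S := by
      intro i him
      rw [hSmem]
      refine ⟨Uᵀ *ᵥ (fun l => V l i), ?_⟩
      congr 1
      rw [Matrix.mulVec_mulVec]
      have h1 : (fun l => V l i) = (fun l => (V * P) l i) := by
        ext l
        rw [Matrix.mul_apply]
        rw [Finset.sum_congr rfl (fun x (_ : x ∈ Finset.univ) => by rw [hcol1 i him x])]
        simp
      rw [h1, ← col_mul (U * Uᵀ) (V * P) i, hUUVP]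
    set T : Submodule ℝ (EuclideanSpace ℝ (Fin d)) :=
      Submodule.span ℝ (Set.range fun i : Fin m => φ (fun l => V l (Fin.castLE hmd i))) with hT
    have hTS : T ≤ S := by
      rw [hT, Submodule.span_le]
      rintro x ⟨i, rfl⟩
      exact hvmem (Fin.castLE hmd i) (by simp)
    have vONm : Orthonormal ℝ (fun i : Fin m => φ (fun l => V l (Fin.castLE hmd i))) := by
      rw [orthonormal_iff_ite]
      intro i j
      rw [hinner]
      show ∑ l, V l (Fin.castLE hmd i) * V l (Fin.castLE hmd j) = if i = j then 1 else 0
      have h1 := congrFun (congrFun hV (Fin.castLE hmd i)) (Fin.castLE hmd j)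
      simp only [Matrix.mul_apply, Matrix.transpose_apply, Matrix.one_apply] at h1
      rw [h1]
      by_cases hij : i = j
      · subst hij; rw [if_pos rfl, if_pos rfl]
      · have h3 : ¬ Fin.castLE hmd i = Fin.castLE hmd j :=
          fun hh => hij (Fin.castLE_injective hmd hh)
        rw [if_neg h3, if_neg hij]
    have hfinT : Module.finrank ℝ T = m := by
      rw [hT, finrank_span_eq_card vONm.linearIndependent]
      exact Fintype.card_fin m
    set S₀ : Submodule ℝ (EuclideanSpace ℝ (Fin d)) := Tᗮ ⊓ S with hS₀
    have hsup : T ⊔ S₀ = S := Submodule.sup_orthogonal_inf_of_hasOrthogonalProjection hTS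
    have hdisj : T ⊓ S₀ = ⊥ := by
      have h1 : T ⊓ S₀ ≤ T ⊓ Tᗮ := inf_le_inf_left T inf_le_left
      rw [(Submodule.orthogonal_disjoint T).eq_bot] at h1
      exact le_bot_iff.mp h1
    have hfinS₀ : Module.finrank ℝ S₀ = k - m := by
      have h := Submodule.finrank_sup_add_finrank_inf_eq T S₀
      rw [hsup, hdisj, hfinS, hfinT, finrank_bot] at h
      omega
    let b : OrthonormalBasis (Fin (k - m)) ℝ S₀ :=
      (stdOrthonormalBasis ℝ S₀).reindex (finCongr hfinS₀)
    set wcolE : Fin k → EuclideanSpace ℝ (Fin d) := fun j =>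
      if h : (j : ℕ) < m then φ (fun l => V l (⟨(j : ℕ), lt_of_lt_of_le h hmd⟩ : Fin d))
      else ((b ⟨(j : ℕ) - m, by omega⟩ : S₀) : EuclideanSpace ℝ (Fin d)) with hwcol
    have hbS₀ : ∀ x : Fin (k - m), ((b x : S₀) : EuclideanSpace ℝ (Fin d)) ∈ S₀ := fun x => (b x).2
    have hwON : Orthonormal ℝ wcolE := by
      rw [orthonormal_iff_ite]
      intro j j'
      rw [hwcol]
      simp only []
      by_cases h : (j : ℕ) < m <;> by_cases h' : (j' : ℕ) < m
      · rw [dif_pos h, dif_pos h']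
        have h2 := orthonormal_iff_ite.mp vON ⟨(j : ℕ), lt_of_lt_of_le h hmd⟩
          ⟨(j' : ℕ), lt_of_lt_of_le h' hmd⟩
        rw [h2]
        by_cases hjj : j = j'
        · subst hjj; rw [if_pos rfl, if_pos rfl]
        · have hcontr : ¬ (⟨(j : ℕ), lt_of_lt_of_le h hmd⟩ : Fin d)
              = ⟨(j' : ℕ), lt_of_lt_of_le h' hmd⟩ := by
            intro hh
            rw [Fin.mk.injEq] at hh
            exact hjj (Fin.ext hh)
          rw [if_neg hcontr, if_neg hjj]
      · rw [dif_pos h, dif_neg h', if_neg (by omega : ¬ j = j')]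
        have hmemT : φ (fun l => V l (⟨(j : ℕ), lt_of_lt_of_le h hmd⟩ : Fin d)) ∈ T := by
          rw [hT]
          refine Submodule.subset_span ⟨⟨(j : ℕ), h⟩, rfl⟩
        have hbo := (Submodule.mem_inf.mp (hbS₀ ⟨(j' : ℕ) - m, by omega⟩)).1
        exact (Submodule.mem_orthogonal _ _).mp hbo _ hmemT
      · rw [dif_neg h, dif_pos h', if_neg (by omega : ¬ j = j')]
        have hmemT : φ (fun l => V l (⟨(j' : ℕ), lt_of_lt_of_le h' hmd⟩ : Fin d)) ∈ T := by
          rw [hT]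
          refine Submodule.subset_span ⟨⟨(j' : ℕ), h'⟩, rfl⟩
        have hbo := (Submodule.mem_inf.mp (hbS₀ ⟨(j : ℕ) - m, by omega⟩)).1
        rw [real_inner_comm]
        exact (Submodule.mem_orthogonal _ _).mp hbo _ hmemT
      · rw [dif_neg h, dif_neg h']
        have h2 := orthonormal_iff_ite.mp b.orthonormal ⟨(j : ℕ) - m, by omega⟩
          ⟨(j' : ℕ) - m, by omega⟩
        rw [Submodule.coe_inner] at h2
        rw [h2]
        by_cases hjj : j = j'
        · subst hjj; rw [if_pos rfl, if_pos rfl]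
        · have hcontr : ¬ (⟨(j : ℕ) - m, by omega⟩ : Fin (k - m))
              = ⟨(j' : ℕ) - m, by omega⟩ := by
            intro hh
            rw [Fin.mk.injEq] at hh
            exact hjj (Fin.ext (by omega))
          rw [if_neg hcontr, if_neg hjj]
    set W : Matrix (Fin d) (Fin k) ℝ := Matrix.of (fun i j => wcolE j i) with hWdef
    have hWOrth : Wᵀ * W = 1 := by
      ext j j'
      have h2 := orthonormal_iff_ite.mp hwON j j'
      rw [hinner] at h2
      simp only [Matrix.mul_apply, Matrix.transpose_apply, Matrix.one_apply]
      exact h2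
    have hPA : P * A = A := by
      rw [hPdef, Matrix.mul_assoc, hAA, Matrix.mul_one]
    have hweig : ∀ j : Fin k, (V * D * Vᵀ) *ᵥ (fun i => W i j)
        = ev (Fin.castLE hkd j) • (fun i => W i j) := by
      intro j
      by_cases h : (j : ℕ) < m
      · have hcol : (fun i => W i j)
            = (fun l => V l (⟨(j : ℕ), lt_of_lt_of_le h hmd⟩ : Fin d)) := by
          funext i
          show wcolE j i = _
          rw [hwcol]
          simp only [dif_pos h]
          rfl
        have hev_eq : ev (Fin.castLE hkd j)
            = ev (⟨(j : ℕ), lt_of_lt_of_le h hmd⟩ : Fin d) := by congr 1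
        rw [hcol, hev_eq]
        have h1 : (V * D * Vᵀ) * V = V * D := by
          rw [Matrix.mul_assoc (V * D) Vᵀ V, hV, Matrix.mul_one]
        rw [← col_mul (V * D * Vᵀ) V ⟨(j : ℕ), lt_of_lt_of_le h hmd⟩, h1]
        funext i
        rw [Pi.smul_apply, smul_eq_mul, Matrix.mul_apply]
        simp only [hD, Matrix.diagonal_apply, mul_ite, mul_zero]
        rw [Finset.sum_ite_eq' Finset.univ _ (fun x => V i x * ev x)]
        simp [mul_comm]
      · have hevc : ev (Fin.castLE hkd j) = c := by
          have h4 : ¬ c < ev (Fin.castLE hkd j) := by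
            rw [← hlt (Fin.castLE hkd j)]
            simpa using h
          have h5 : c ≤ ev (Fin.castLE hkd j) := hclower _ (by simp [j.isLt])
          linarith
        set x : EuclideanSpace ℝ (Fin d) := wcolE j with hx
        have hxmem : x ∈ S₀ := by
          rw [hx, hwcol]; simp only [dif_neg h]; exact hbS₀ _
        have hxS : x ∈ S := (Submodule.mem_inf.mp hxmem).2
        have hxT : x ∈ Tᗮ := (Submodule.mem_inf.mp hxmem).1
        obtain ⟨y, hy⟩ := (hSmem x).mp hxS
        have hcolx : (fun i => W i j) = (fun i => x i) := rfl
        have hxy : (fun i => x i) = U *ᵥ y := by rw [← hy]; rfl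
        set v : Fin d → ℝ := Vᵀ *ᵥ (fun i => x i) with hv
        have hvA : v = A *ᵥ y := by rw [hv, hxy, Matrix.mulVec_mulVec, hAdef]
        have hPv : P *ᵥ v = v := by
          rw [hvA, Matrix.mulVec_mulVec, hPA]
        have hvm : ∀ i : Fin d, (i : ℕ) < m → v i = 0 := by
          intro i him
          have hmemT : φ (fun l => V l i) ∈ T := by
            rw [hT]
            exact Submodule.subset_span ⟨⟨(i : ℕ), him⟩, rfl⟩
          have h6 := (Submodule.mem_orthogonal T x).mp hxT _ hmemT
          rw [hinner] at h6
          have h7 : v i = ∑ l, V l i * x l := by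
            rw [hv]; simp [Matrix.mulVec, dotProduct, Matrix.transpose_apply]
          rw [h7]
          exact h6
        have hvlt : ∀ i : Fin d, ev i < c → v i = 0 := by
          intro i hci
          have h6 : v i = (P *ᵥ v) i := by rw [hPv]
          rw [h6]
          simp only [Matrix.mulVec, dotProduct]
          refine Finset.sum_eq_zero fun l _ => ?_
          rw [hPsym i l, hcol0 i hci l, zero_mul]
        have hDv : D *ᵥ v = c • v := by
          funext i
          rw [Pi.smul_apply, smul_eq_mul]
          have h8 : (D *ᵥ v) i = ev i * v i := by
            rw [hD]
            simp [Matrix.mulVec, dotProduct, Matrix.diagonal_apply, ite_mul, zero_mul]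
          rw [h8]
          by_cases him : (i : ℕ) < m
          · rw [hvm i him]; ring
          · by_cases hci : ev i < c
            · rw [hvlt i hci]; ring
            · have h9 : ¬ c < ev i := by rw [← hlt i]; exact him
              have h10 : ev i = c := le_antisymm (not_lt.mp h9) (not_lt.mp hci)
              rw [h10]
        rw [hcolx, hevc]
        have e5 : (V * D * Vᵀ) *ᵥ (fun i => x i) = V *ᵥ (D *ᵥ v) := by
          rw [hv, Matrix.mulVec_mulVec, Matrix.mulVec_mulVec]
        rw [e5, hDv, Matrix.mulVec_smul]
        congr 1
        rw [hv, Matrix.mulVec_mulVec, hVV, Matrix.one_mulVec]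
    have hwmemS : ∀ j : Fin k, wcolE j ∈ S := by
      intro j
      rw [hwcol]
      by_cases h : (j : ℕ) < m
      · simp only [dif_pos h]; exact hvmem _ h
      · simp only [dif_neg h]; exact (Submodule.mem_inf.mp (hbS₀ _)).2
    have hspanW : Submodule.span ℝ (Set.range wcolE) = S := by
      apply Submodule.eq_of_le_of_finrank_le
      · rw [Submodule.span_le]; rintro z ⟨j, rfl⟩; exact hwmemS j
      · rw [hfinS, finrank_span_eq_card hwON.linearIndependent, Fintype.card_fin]
    refine ⟨W, hWOrth, hweig, ?_⟩
    have hmapU : Submodule.map φ.toLinearMap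
        (Submodule.span ℝ (Set.range fun j : Fin k => (fun i => U i j))) = S := by
      rw [Submodule.map_span, ← Set.range_comp, hSspan]
      rfl
    have hmapW : Submodule.map φ.toLinearMap
        (Submodule.span ℝ (Set.range fun j : Fin k => (fun i => W i j))) = S := by
      rw [Submodule.map_span, ← Set.range_comp, ← hspanW]
      rfl
    exact Submodule.map_injective_of_injective (f := φ.toLinearMap) φ.injective
      (hmapU.trans hmapW.symm)





lemma trace_eigencols (M : Matrix (Fin d) (Fin d) ℝ) (W : Matrix (Fin d) (Fin k) ℝ)
    (hW : Wᵀ * W = 1) (lam : Fin k → ℝ)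
    (heig : ∀ j, M *ᵥ (fun i => W i j) = lam j • (fun i => W i j)) :
    trace (Wᵀ * M * W) = ∑ j, lam j := by
  have hdiag : ∀ j, (Wᵀ * M * W) j j = lam j := by
    intro j
    have h2 : ∀ i, (M * W) i j = lam j * W i j := by
      intro i
      have h3 := congrFun (heig j) i
      have h4 : (fun i => (M * W) i j) i = (M *ᵥ fun i => W i j) i := by
        rw [col_mul]
      simpa using h4.trans h3
    have h5 : (Wᵀ * M * W) j j = ∑ i, W i j * (M * W) i j := by
      rw [Matrix.mul_assoc]; simp [mul_apply]
    have h6 : ∑ i, W i j * (M * W) i j = lam j * ∑ i, W i j * W i j := by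
      rw [Finset.mul_sum]
      refine Finset.sum_congr rfl fun i _ => ?_
      rw [h2]; ring
    have h7 : ∑ i, W i j * W i j = 1 := by
      have := congrFun (congrFun hW j) j
      simpa [mul_apply] using this
    rw [h5, h6, h7, mul_one]
  simp only [Matrix.trace, Matrix.diag]
  exact Finset.sum_congr rfl fun j _ => hdiag j

lemma proj_eq_of_span_eq (U W : Matrix (Fin d) (Fin k) ℝ) (hU : Uᵀ * U = 1) (hW : Wᵀ * W = 1)
    (hspan : Submodule.span ℝ (Set.range fun j : Fin k => (fun i => U i j))
      = Submodule.span ℝ (Set.range fun j : Fin k => (fun i => W i j))) :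
    U * Uᵀ = W * Wᵀ := by
  have hrange : ∀ j : Fin k, (fun i => W i j) ∈ LinearMap.range (Matrix.mulVecLin U) := by
    intro j
    rw [Matrix.range_mulVecLin]
    have h1 : (fun i => W i j) ∈ Submodule.span ℝ (Set.range fun j : Fin k => (fun i => W i j)) :=
      Submodule.subset_span (Set.mem_range_self j)
    rw [← hspan] at h1
    exact h1
  have hUUW : U * Uᵀ * W = W := by
    ext i j
    obtain ⟨x, hx⟩ := hrange j
    have hx' : U *ᵥ x = fun i => W i j := hx
    have : (fun i => (U * Uᵀ * W) i j) = fun i => W i j := by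
      rw [col_mul, ← hx', Matrix.mulVec_mulVec, Matrix.mul_assoc, hU, Matrix.mul_one]
    exact congrFun this i
  have hS : (Uᵀ * W)ᵀ * (Uᵀ * W) = 1 := by
    rw [Matrix.transpose_mul, Matrix.transpose_transpose, Matrix.mul_assoc,
      ← Matrix.mul_assoc U Uᵀ W, hUUW, hW]
  have hS' : (Uᵀ * W) * (Uᵀ * W)ᵀ = 1 := mul_eq_one_comm.mp hS
  have hW' : W = U * (Uᵀ * W) := by rw [← Matrix.mul_assoc, hUUW]
  have e1 : W * Wᵀ = U * Uᵀ := by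
    calc W * Wᵀ = (U * (Uᵀ * W)) * ((Uᵀ * W)ᵀ * Uᵀ) := by
          rw [← Matrix.transpose_mul, ← hW']
      _ = U * ((Uᵀ * W) * (Uᵀ * W)ᵀ) * Uᵀ := by simp only [Matrix.mul_assoc]
      _ = U * Uᵀ := by rw [hS', Matrix.mul_one]
  exact e1.symm



variable {Ω : Type*} [MeasureSpace Ω] [IsProbabilityMeasure (ℙ : Measure Ω)]

lemma integrable_sq_coord (f : Ω → Fin d → ℝ) (hf : Measurable f)
    (h2 : Integrable (fun ω => ∑ i, f ω i ^ 2) ℙ) (i : Fin d) :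
    Integrable (fun ω => f ω i ^ 2) ℙ := by
  refine h2.mono' (((measurable_pi_apply i).comp hf).pow_const 2).aestronglyMeasurable ?_
  filter_upwards with ω
  rw [Real.norm_eq_abs, abs_of_nonneg (sq_nonneg _)]
  exact Finset.single_le_sum (fun l (_ : l ∈ Finset.univ) => sq_nonneg (f ω l))
    (Finset.mem_univ i)

lemma integrable_mul_of_sq (f g : Ω → ℝ) (hf : Measurable f) (hg : Measurable g)
    (hf2 : Integrable (fun ω => f ω ^ 2) ℙ) (hg2 : Integrable (fun ω => g ω ^ 2) ℙ) :
    Integrable (fun ω => f ω * g ω) ℙ := by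
  refine (hf2.add hg2).mono' (hf.mul hg).aestronglyMeasurable ?_
  filter_upwards with ω
  rw [Real.norm_eq_abs, abs_mul]
  simp only [Pi.add_apply]
  nlinarith [sq_nonneg (|f ω| - |g ω|), sq_abs (f ω), sq_abs (g ω), abs_nonneg (f ω),
    abs_nonneg (g ω)]

lemma integrable_of_sq (f : Ω → ℝ) (hf : Measurable f)
    (hf2 : Integrable (fun ω => f ω ^ 2) ℙ) : Integrable f ℙ := by
  refine ((integrable_const (1 : ℝ)).add hf2).mono' hf.aestronglyMeasurable ?_
  filter_upwards with ω
  rw [Real.norm_eq_abs]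
  simp only [Pi.add_apply]
  nlinarith [sq_nonneg (|f ω| - 1), sq_abs (f ω), abs_nonneg (f ω)]

lemma sub_sq_integrable (f g : Ω → ℝ) (hf : Measurable f) (hg : Measurable g)
    (hf2 : Integrable (fun ω => f ω ^ 2) ℙ) (hg2 : Integrable (fun ω => g ω ^ 2) ℙ) :
    Integrable (fun ω => (f ω - g ω) ^ 2) ℙ := by
  refine (((hf2.add hg2)).const_mul 2).mono' ((hf.sub hg).pow_const 2).aestronglyMeasurable ?_
  filter_upwards with ω
  rw [Real.norm_eq_abs, abs_of_nonneg (sq_nonneg _)]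
  simp only [Pi.add_apply]
  nlinarith [sq_nonneg (f ω + g ω)]

lemma integral_quadform (Z : Ω → Fin d → ℝ)
    (hint : ∀ i i', Integrable (fun ω => Z ω i * Z ω i') ℙ)
    (U : Matrix (Fin d) (Fin k) ℝ) :
    ∫ ω, ∑ j, ((Uᵀ *ᵥ (Z ω)) j) ^ 2
      = ∑ j : Fin k, ∑ i, ∑ i', U i j * U i' j * (∫ ω, Z ω i * Z ω i') := by
  have h1 : ∀ ω, ∑ j, ((Uᵀ *ᵥ (Z ω)) j) ^ 2
      = ∑ j : Fin k, ∑ i, ∑ i', U i j * U i' j * (Z ω i * Z ω i') := by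
    intro ω
    refine Finset.sum_congr rfl fun j _ => ?_
    have h2 : ((Uᵀ *ᵥ (Z ω)) j) = ∑ i, U i j * Z ω i := by
      simp [Matrix.mulVec, dotProduct]
    rw [h2, sq, Finset.sum_mul_sum]
    exact Finset.sum_congr rfl fun i _ => Finset.sum_congr rfl fun i' _ => by ring
  simp_rw [h1]
  rw [integral_finset_sum]
  · refine Finset.sum_congr rfl fun j _ => ?_
    rw [integral_finset_sum]
    · refine Finset.sum_congr rfl fun i _ => ?_
      rw [integral_finset_sum]
      · exact Finset.sum_congr rfl fun i' _ => MeasureTheory.integral_const_mul _ _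
      · exact fun i' _ => (hint i i').const_mul _
    · exact fun i _ => integrable_finset_sum _ fun i' _ => (hint i i').const_mul _
  · exact fun j _ => integrable_finset_sum _ fun i _ =>
      integrable_finset_sum _ fun i' _ => (hint i i').const_mul _

lemma trace_quadform (M : Matrix (Fin d) (Fin d) ℝ) (U : Matrix (Fin d) (Fin k) ℝ) :
    trace (Uᵀ * M * U) = ∑ j : Fin k, ∑ i, ∑ i', U i j * M i i' * U i' j := by
  simp only [Matrix.trace, Matrix.diag, Matrix.mul_apply, Matrix.transpose_apply,
    Finset.sum_mul]
  refine Finset.sum_congr rfl fun j _ => ?_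
  rw [Finset.sum_comm]

lemma prod_sub_expand (f g f' g' : Ω → ℝ)
    (h1 : Integrable (fun ω => f ω * f' ω) ℙ) (h2 : Integrable (fun ω => f ω * g' ω) ℙ)
    (h3 : Integrable (fun ω => g ω * f' ω) ℙ) (h4 : Integrable (fun ω => g ω * g' ω) ℙ) :
    ∫ ω, (f ω - g ω) * (f' ω - g' ω)
      = (∫ ω, f ω * f' ω) - (∫ ω, f ω * g' ω) - (∫ ω, g ω * f' ω) + (∫ ω, g ω * g' ω) := by
  have hfun : (fun ω => (f ω - g ω) * (f' ω - g' ω))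
      = fun ω => f ω * f' ω - f ω * g' ω - g ω * f' ω + g ω * g' ω := by funext ω; ring
  have hA : Integrable (fun ω => f ω * f' ω - f ω * g' ω) ℙ := h1.sub h2
  have hB : Integrable (fun ω => f ω * f' ω - f ω * g' ω - g ω * f' ω) ℙ := hA.sub h3
  rw [hfun, integral_add hB h4, integral_sub hA h3, integral_sub h1 h2]

lemma cov_expand (f g : Ω → ℝ) (a b : ℝ) (hf : Integrable f ℙ) (hg : Integrable g ℙ)
    (hfg : Integrable (fun ω => f ω * g ω) ℙ) :
    ∫ ω, (f ω - a) * (g ω - b)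
      = (∫ ω, f ω * g ω) - a * (∫ ω, g ω) - b * (∫ ω, f ω) + a * b := by
  have hfun : (fun ω => (f ω - a) * (g ω - b))
      = fun ω => f ω * g ω - a * g ω - b * f ω + a * b := by funext ω; ring
  have hA : Integrable (fun ω => f ω * g ω - a * g ω) ℙ := hfg.sub (hg.const_mul a)
  have hB : Integrable (fun ω => f ω * g ω - a * g ω - b * f ω) ℙ := hA.sub (hf.const_mul b)
  rw [hfun, integral_add hB (integrable_const _), integral_sub hA (hf.const_mul b),
    integral_sub hfg (hg.const_mul a), MeasureTheory.integral_const_mul,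
    MeasureTheory.integral_const_mul, integral_const]
  simp [measure_univ]

lemma eig_col {V : Matrix (Fin d) (Fin d) ℝ} (hV : Vᵀ * V = 1) (ev : Fin d → ℝ) (i0 : Fin d) :
    (V * Matrix.diagonal ev * Vᵀ) *ᵥ (fun l => V l i0) = ev i0 • (fun l => V l i0) := by
  have h1 : (V * Matrix.diagonal ev * Vᵀ) * V = V * Matrix.diagonal ev := by
    rw [Matrix.mul_assoc (V * Matrix.diagonal ev) Vᵀ V, hV, Matrix.mul_one]
  rw [← col_mul (V * Matrix.diagonal ev * Vᵀ) V i0, h1]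
  funext i
  rw [Pi.smul_apply, smul_eq_mul, Matrix.mul_apply]
  simp only [Matrix.diagonal_apply, mul_ite, mul_zero]
  rw [Finset.sum_ite_eq' Finset.univ _ (fun x => V i x * ev x)]
  simp [mul_comm]


end CTP

/-- contrastive transport projection: full theorem.  Let `X₀ ∼ P₀`,
`X₁ ∼ P₁` have means `μ₀, μ₁` and covariances `C₀, C₁`, let `Y₀, Y₀′ ∼ P₀` be
independent copies also independent of `(X₀, X₁)`, and for semi-orthogonal
`U ∈ ℝ^{d×k}` set `Γ(U) = E[‖Uᵀ(X₁−Y₀)‖₂²] − E[‖Uᵀ(X₀−Y₀′)‖₂²]`.  Let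
`M = (μ₁−μ₀)(μ₁−μ₀)ᵀ + C₁ − C₀` have eigenvalues `ev 0 ≥ ⋯ ≥ ev (d−1)` (witnessed by
an orthogonal eigendecomposition).  Then the maximum of `Γ(U)` over semi-orthogonal `U`
equals `λ₁(M) + ⋯ + λ_k(M)` (and is attained), and for semi-orthogonal `U` the maximum
is attained exactly when the column space of `U` is a top-`k` eigenspace of `M`, i.e.
when it coincides with the span of some `k` orthonormal eigenvectors of `M` for the `k`
largest eigenvalues. -/
theorem contrastive_transport_projection_optimality
    {d k : ℕ} (hk : 1 ≤ k) (hkd : k ≤ d)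
    {Ω : Type*} [MeasureSpace Ω] [IsProbabilityMeasure (ℙ : Measure Ω)]
    (X₀ X₁ Y₀ Y₀' : Ω → (Fin d → ℝ))
    (hX₀ : Measurable X₀) (hX₁ : Measurable X₁)
    (hY₀ : Measurable Y₀) (hY₀' : Measurable Y₀')
    (hidY₀ : IdentDistrib Y₀ X₀ ℙ ℙ) (hidY₀' : IdentDistrib Y₀' X₀ ℙ ℙ)
    (hYY : IndepFun Y₀ Y₀' ℙ)
    (hXY₀ : IndepFun (fun ω => (X₀ ω, X₁ ω)) Y₀ ℙ)
    (hXY₀' : IndepFun (fun ω => (X₀ ω, X₁ ω)) Y₀' ℙ)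
    (hX₀2 : Integrable (fun ω => ∑ i, (X₀ ω i) ^ 2) ℙ)
    (hX₁2 : Integrable (fun ω => ∑ i, (X₁ ω i) ^ 2) ℙ)
    (μ₀ μ₁ : Fin d → ℝ)
    (hμ₀ : ∀ i, μ₀ i = ∫ ω, X₀ ω i) (hμ₁ : ∀ i, μ₁ i = ∫ ω, X₁ ω i)
    (C₀ C₁ : Matrix (Fin d) (Fin d) ℝ)
    (hC₀ : ∀ i j, C₀ i j = ∫ ω, (X₀ ω i - μ₀ i) * (X₀ ω j - μ₀ j))
    (hC₁ : ∀ i j, C₁ i j = ∫ ω, (X₁ ω i - μ₁ i) * (X₁ ω j - μ₁ j))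
    (Γ : Matrix (Fin d) (Fin k) ℝ → ℝ)
    (hΓ : ∀ U : Matrix (Fin d) (Fin k) ℝ,
        Γ U = (∫ ω, ∑ j, ((Uᵀ *ᵥ (X₁ ω - Y₀ ω)) j) ^ 2)
              - (∫ ω, ∑ j, ((Uᵀ *ᵥ (X₀ ω - Y₀' ω)) j) ^ 2))
    (M : Matrix (Fin d) (Fin d) ℝ)
    (hM : M = vecMulVec (μ₁ - μ₀) (μ₁ - μ₀) + C₁ - C₀)
    (ev : Fin d → ℝ) (hev : Antitone ev)
    (V : Matrix (Fin d) (Fin d) ℝ) (hV : Vᵀ * V = 1)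
    (hdecomp : M = V * Matrix.diagonal ev * Vᵀ) :
    IsGreatest {r : ℝ | ∃ U : Matrix (Fin d) (Fin k) ℝ, Uᵀ * U = 1 ∧ r = Γ U}
      (∑ j : Fin k, ev (Fin.castLE hkd j))
    ∧ ∀ U : Matrix (Fin d) (Fin k) ℝ, Uᵀ * U = 1 →
        (Γ U = ∑ j : Fin k, ev (Fin.castLE hkd j)
          ↔ ∃ W : Matrix (Fin d) (Fin k) ℝ, Wᵀ * W = 1
              ∧ (∀ j : Fin k, M *ᵥ (fun i => W i j)
                    = ev (Fin.castLE hkd j) • (fun i => W i j))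
              ∧ Submodule.span ℝ (Set.range fun j : Fin k => (fun i => U i j))
                  = Submodule.span ℝ (Set.range fun j : Fin k => (fun i => W i j))) := by
  classical
  -- coordinate measurability
  have mX₀ : ∀ i, Measurable fun ω => X₀ ω i := fun i => (measurable_pi_apply i).comp hX₀
  have mX₁ : ∀ i, Measurable fun ω => X₁ ω i := fun i => (measurable_pi_apply i).comp hX₁
  have mY₀ : ∀ i, Measurable fun ω => Y₀ ω i := fun i => (measurable_pi_apply i).comp hY₀
  have mY₀' : ∀ i, Measurable fun ω => Y₀' ω i := fun i => (measurable_pi_apply i).comp hY₀'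
  have hsummeas : Measurable (fun v : Fin d → ℝ => ∑ i, v i ^ 2) :=
    Finset.measurable_sum _ fun i _ => (measurable_pi_apply i).pow_const 2
  have hY₀2 : Integrable (fun ω => ∑ i, Y₀ ω i ^ 2) ℙ :=
    (hidY₀.comp hsummeas).integrable_iff.mpr hX₀2
  have hY₀'2 : Integrable (fun ω => ∑ i, Y₀' ω i ^ 2) ℙ :=
    (hidY₀'.comp hsummeas).integrable_iff.mpr hX₀2
  have sX₀ : ∀ i, Integrable (fun ω => X₀ ω i ^ 2) ℙ := CTP.integrable_sq_coord X₀ hX₀ hX₀2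
  have sX₁ : ∀ i, Integrable (fun ω => X₁ ω i ^ 2) ℙ := CTP.integrable_sq_coord X₁ hX₁ hX₁2
  have sY₀ : ∀ i, Integrable (fun ω => Y₀ ω i ^ 2) ℙ := CTP.integrable_sq_coord Y₀ hY₀ hY₀2
  have sY₀' : ∀ i, Integrable (fun ω => Y₀' ω i ^ 2) ℙ := CTP.integrable_sq_coord Y₀' hY₀' hY₀'2
  have iX₀ : ∀ i, Integrable (fun ω => X₀ ω i) ℙ := fun i => CTP.integrable_of_sq _ (mX₀ i) (sX₀ i)
  have iX₁ : ∀ i, Integrable (fun ω => X₁ ω i) ℙ := fun i => CTP.integrable_of_sq _ (mX₁ i) (sX₁ i)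
  have pmul : ∀ (f g : Ω → Fin d → ℝ), Measurable f → Measurable g →
      (∀ i, Integrable (fun ω => f ω i ^ 2) ℙ) → (∀ i, Integrable (fun ω => g ω i ^ 2) ℙ) →
      ∀ i i', Integrable (fun ω => f ω i * g ω i') ℙ := fun f g hf hg hf2 hg2 i i' =>
    CTP.integrable_mul_of_sq _ _ ((measurable_pi_apply i).comp hf)
      ((measurable_pi_apply i').comp hg) (hf2 i) (hg2 i')
  have pX₁X₁ := pmul X₁ X₁ hX₁ hX₁ sX₁ sX₁
  have pX₁Y₀ := pmul X₁ Y₀ hX₁ hY₀ sX₁ sY₀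
  have pY₀X₁ := pmul Y₀ X₁ hY₀ hX₁ sY₀ sX₁
  have pY₀Y₀ := pmul Y₀ Y₀ hY₀ hY₀ sY₀ sY₀
  have pX₀X₀ := pmul X₀ X₀ hX₀ hX₀ sX₀ sX₀
  have pX₀Y₀' := pmul X₀ Y₀' hX₀ hY₀' sX₀ sY₀'
  have pY₀'X₀ := pmul Y₀' X₀ hY₀' hX₀ sY₀' sX₀
  have pY₀'Y₀' := pmul Y₀' Y₀' hY₀' hY₀' sY₀' sY₀'
  -- marginal expectations of the independent copies
  have EY₀ : ∀ i, (∫ ω, Y₀ ω i) = μ₀ i := fun i => by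
    have h' : (∫ ω, Y₀ ω i) = ∫ ω, X₀ ω i :=
      (hidY₀.comp (measurable_pi_apply i)).integral_eq
    rw [h']; exact (hμ₀ i).symm
  have EY₀' : ∀ i, (∫ ω, Y₀' ω i) = μ₀ i := fun i => by
    have h' : (∫ ω, Y₀' ω i) = ∫ ω, X₀ ω i :=
      (hidY₀'.comp (measurable_pi_apply i)).integral_eq
    rw [h']; exact (hμ₀ i).symm
  have EY₀Y₀ : ∀ i i', (∫ ω, Y₀ ω i * Y₀ ω i') = ∫ ω, X₀ ω i * X₀ ω i' := fun i i' =>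
    (hidY₀.comp ((measurable_pi_apply i).mul (measurable_pi_apply i'))).integral_eq
  have EY₀'Y₀' : ∀ i i', (∫ ω, Y₀' ω i * Y₀' ω i') = ∫ ω, X₀ ω i * X₀ ω i' := fun i i' =>
    (hidY₀'.comp ((measurable_pi_apply i).mul (measurable_pi_apply i'))).integral_eq
  -- independence factorizations
  have EX₁Y₀ : ∀ i i', (∫ ω, X₁ ω i * Y₀ ω i') = μ₁ i * μ₀ i' := by
    intro i i'
    have hind : IndepFun (fun ω => X₁ ω i) (fun ω => Y₀ ω i') ℙ :=
      hXY₀.comp ((measurable_pi_apply i).comp measurable_snd) (measurable_pi_apply i')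
    have h : (∫ ω, X₁ ω i * Y₀ ω i') = (∫ ω, X₁ ω i) * ∫ ω, Y₀ ω i' :=
      hind.integral_mul_eq_mul_integral (mX₁ i).aestronglyMeasurable (mY₀ i').aestronglyMeasurable
    rw [h, EY₀ i', ← hμ₁ i]
  have EY₀X₁ : ∀ i i', (∫ ω, Y₀ ω i * X₁ ω i') = μ₀ i * μ₁ i' := by
    intro i i'
    have hind : IndepFun (fun ω => Y₀ ω i) (fun ω => X₁ ω i') ℙ :=
      hXY₀.symm.comp (measurable_pi_apply i) ((measurable_pi_apply i').comp measurable_snd)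
    have h : (∫ ω, Y₀ ω i * X₁ ω i') = (∫ ω, Y₀ ω i) * ∫ ω, X₁ ω i' :=
      hind.integral_mul_eq_mul_integral (mY₀ i).aestronglyMeasurable (mX₁ i').aestronglyMeasurable
    rw [h, EY₀ i, ← hμ₁ i']
  have EX₀Y₀' : ∀ i i', (∫ ω, X₀ ω i * Y₀' ω i') = μ₀ i * μ₀ i' := by
    intro i i'
    have hind : IndepFun (fun ω => X₀ ω i) (fun ω => Y₀' ω i') ℙ :=
      hXY₀'.comp ((measurable_pi_apply i).comp measurable_fst) (measurable_pi_apply i')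
    have h : (∫ ω, X₀ ω i * Y₀' ω i') = (∫ ω, X₀ ω i) * ∫ ω, Y₀' ω i' :=
      hind.integral_mul_eq_mul_integral (mX₀ i).aestronglyMeasurable (mY₀' i').aestronglyMeasurable
    rw [h, EY₀' i', ← hμ₀ i]
  have EY₀'X₀ : ∀ i i', (∫ ω, Y₀' ω i * X₀ ω i') = μ₀ i * μ₀ i' := by
    intro i i'
    have hind : IndepFun (fun ω => Y₀' ω i) (fun ω => X₀ ω i') ℙ :=
      hXY₀'.symm.comp (measurable_pi_apply i) ((measurable_pi_apply i').comp measurable_fst)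
    have h : (∫ ω, Y₀' ω i * X₀ ω i') = (∫ ω, Y₀' ω i) * ∫ ω, X₀ ω i' :=
      hind.integral_mul_eq_mul_integral (mY₀' i).aestronglyMeasurable (mX₀ i').aestronglyMeasurable
    rw [h, EY₀' i, ← hμ₀ i']
  -- covariance identities
  have hCov₁ : ∀ i i', C₁ i i' = (∫ ω, X₁ ω i * X₁ ω i') - μ₁ i * μ₁ i' := by
    intro i i'
    rw [hC₁ i i', CTP.cov_expand _ _ _ _ (iX₁ i) (iX₁ i') (pX₁X₁ i i'), ← hμ₁ i, ← hμ₁ i']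
    ring
  have hCov₀ : ∀ i i', C₀ i i' = (∫ ω, X₀ ω i * X₀ ω i') - μ₀ i * μ₀ i' := by
    intro i i'
    rw [hC₀ i i', CTP.cov_expand _ _ _ _ (iX₀ i) (iX₀ i') (pX₀X₀ i i'), ← hμ₀ i, ← hμ₀ i']
    ring
  have hMent : ∀ i i', M i i'
      = ((∫ ω, X₁ ω i * X₁ ω i') - μ₁ i * μ₀ i' - μ₀ i * μ₁ i' + (∫ ω, X₀ ω i * X₀ ω i'))
        - ((∫ ω, X₀ ω i * X₀ ω i') - μ₀ i * μ₀ i' - μ₀ i * μ₀ i'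
            + (∫ ω, X₀ ω i * X₀ ω i')) := by
    intro i i'
    rw [hM]
    simp only [Matrix.add_apply, Matrix.sub_apply, Matrix.vecMulVec_apply, Pi.sub_apply]
    rw [hCov₁ i i', hCov₀ i i']
    ring
  have hG1 : ∀ i i', (∫ ω, (X₁ ω - Y₀ ω) i * (X₁ ω - Y₀ ω) i')
      = (∫ ω, X₁ ω i * X₁ ω i') - μ₁ i * μ₀ i' - μ₀ i * μ₁ i'
          + (∫ ω, X₀ ω i * X₀ ω i') := by
    intro i i'
    have h := CTP.prod_sub_expand (fun ω => X₁ ω i) (fun ω => Y₀ ω i)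
      (fun ω => X₁ ω i') (fun ω => Y₀ ω i') (pX₁X₁ i i') (pX₁Y₀ i i') (pY₀X₁ i i')
      (pY₀Y₀ i i')
    rw [show (∫ ω, (X₁ ω - Y₀ ω) i * (X₁ ω - Y₀ ω) i')
        = ∫ ω, (X₁ ω i - Y₀ ω i) * (X₁ ω i' - Y₀ ω i') from rfl, h,
      EX₁Y₀ i i', EY₀X₁ i i', EY₀Y₀ i i']
  have hG2 : ∀ i i', (∫ ω, (X₀ ω - Y₀' ω) i * (X₀ ω - Y₀' ω) i')
      = (∫ ω, X₀ ω i * X₀ ω i') - μ₀ i * μ₀ i' - μ₀ i * μ₀ i'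
          + (∫ ω, X₀ ω i * X₀ ω i') := by
    intro i i'
    have h := CTP.prod_sub_expand (fun ω => X₀ ω i) (fun ω => Y₀' ω i)
      (fun ω => X₀ ω i') (fun ω => Y₀' ω i') (pX₀X₀ i i') (pX₀Y₀' i i') (pY₀'X₀ i i')
      (pY₀'Y₀' i i')
    rw [show (∫ ω, (X₀ ω - Y₀' ω) i * (X₀ ω - Y₀' ω) i')
        = ∫ ω, (X₀ ω i - Y₀' ω i) * (X₀ ω i' - Y₀' ω i') from rfl, h,
      EX₀Y₀' i i', EY₀'X₀ i i', EY₀'Y₀' i i']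
  have hint1 : ∀ i i', Integrable (fun ω => (X₁ ω - Y₀ ω) i * (X₁ ω - Y₀ ω) i') ℙ := by
    intro i i'
    exact CTP.integrable_mul_of_sq _ _ ((mX₁ i).sub (mY₀ i)) ((mX₁ i').sub (mY₀ i'))
      (CTP.sub_sq_integrable _ _ (mX₁ i) (mY₀ i) (sX₁ i) (sY₀ i))
      (CTP.sub_sq_integrable _ _ (mX₁ i') (mY₀ i') (sX₁ i') (sY₀ i'))
  have hint2 : ∀ i i', Integrable (fun ω => (X₀ ω - Y₀' ω) i * (X₀ ω - Y₀' ω) i') ℙ := by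
    intro i i'
    exact CTP.integrable_mul_of_sq _ _ ((mX₀ i).sub (mY₀' i)) ((mX₀ i').sub (mY₀' i'))
      (CTP.sub_sq_integrable _ _ (mX₀ i) (mY₀' i) (sX₀ i) (sY₀' i))
      (CTP.sub_sq_integrable _ _ (mX₀ i') (mY₀' i') (sX₀ i') (sY₀' i'))
  -- Γ is the quadratic trace form of M
  have hGamma : ∀ U : Matrix (Fin d) (Fin k) ℝ, Γ U = trace (Uᵀ * M * U) := by
    intro U
    rw [hΓ U, CTP.integral_quadform (fun ω => X₁ ω - Y₀ ω) hint1 U,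
      CTP.integral_quadform (fun ω => X₀ ω - Y₀' ω) hint2 U, CTP.trace_quadform,
      ← Finset.sum_sub_distrib]
    refine Finset.sum_congr rfl fun j _ => ?_
    rw [← Finset.sum_sub_distrib]
    refine Finset.sum_congr rfl fun i _ => ?_
    rw [← Finset.sum_sub_distrib]
    refine Finset.sum_congr rfl fun i' _ => ?_
    rw [hG1 i i', hG2 i i', hMent i i']
    ring
  -- Ky Fan machinery
  have kmain := fun (U : Matrix (Fin d) (Fin k) ℝ) (hU : Uᵀ * U = 1) =>
    CTP.kyfan_main hk hkd ev hev V hV U hU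
  have hback : ∀ U W : Matrix (Fin d) (Fin k) ℝ, Uᵀ * U = 1 → Wᵀ * W = 1 →
      (∀ j : Fin k, M *ᵥ (fun i => W i j) = ev (Fin.castLE hkd j) • (fun i => W i j)) →
      Submodule.span ℝ (Set.range fun j : Fin k => (fun i => U i j))
        = Submodule.span ℝ (Set.range fun j : Fin k => (fun i => W i j)) →
      Γ U = ∑ j : Fin k, ev (Fin.castLE hkd j) := by
    intro U W hU hW heig hspan
    have hproj := CTP.proj_eq_of_span_eq U W hU hW hspan
    have h1 : trace (Uᵀ * M * U) = trace (Wᵀ * M * W) := by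
      calc trace (Uᵀ * M * U) = trace (U * Uᵀ * M) := by rw [Matrix.trace_mul_cycle]
        _ = trace (W * Wᵀ * M) := by rw [hproj]
        _ = trace (Wᵀ * M * W) := by rw [← Matrix.trace_mul_cycle]
    rw [hGamma U, h1, CTP.trace_eigencols M W hW _ heig]
  set Ustar : Matrix (Fin d) (Fin k) ℝ := Matrix.of (fun i j => V i (Fin.castLE hkd j))
    with hUstar
  have hUsOrth : Ustarᵀ * Ustar = 1 := by
    ext j j'
    simp only [Matrix.mul_apply, Matrix.transpose_apply, Matrix.one_apply, hUstar,
      Matrix.of_apply]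
    have h1 := congrFun (congrFun hV (Fin.castLE hkd j)) (Fin.castLE hkd j')
    simp only [Matrix.mul_apply, Matrix.transpose_apply, Matrix.one_apply] at h1
    rw [h1]
    by_cases hjj : j = j'
    · subst hjj; rw [if_pos rfl, if_pos rfl]
    · rw [if_neg (fun hh => hjj (Fin.castLE_injective hkd hh)), if_neg hjj]
  have hUsEig : ∀ j : Fin k, M *ᵥ (fun i => Ustar i j)
      = ev (Fin.castLE hkd j) • (fun i => Ustar i j) := by
    intro j
    rw [hdecomp]
    exact CTP.eig_col hV ev (Fin.castLE hkd j)
  have hUsVal : Γ Ustar = ∑ j : Fin k, ev (Fin.castLE hkd j) :=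
    hback Ustar Ustar hUsOrth hUsOrth hUsEig rfl
  constructor
  · constructor
    · exact ⟨Ustar, hUsOrth, hUsVal.symm⟩
    · rintro r ⟨U, hU, rfl⟩
      rw [hGamma U, hdecomp]
      exact (kmain U hU).1
  · intro U hU
    constructor
    · intro hΓU
      have htr : trace (Uᵀ * (V * Matrix.diagonal ev * Vᵀ) * U)
          = ∑ j : Fin k, ev (Fin.castLE hkd j) := by
        rw [← hdecomp, ← hGamma U]; exact hΓU
      obtain ⟨W, hW, heig, hspan⟩ := (kmain U hU).2 htr
      exact ⟨W, hW, by rw [hdecomp]; exact heig, hspan⟩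
    · rintro ⟨W, hW, heig, hspan⟩
      exact hback U W hU hW heig hspan
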